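/- For every 3-uniform hypergraph H on N vertices with average degree d ≤ N and with ex-type bound: if H contains no tight path P_s (s fixed), then the number of edges of H is O_s(N^2); consequently r(P_s, t) = O_s(t^2). -/

import Mathlib

open Finset

/-- pairs with positive codegree -/
def posPairs (n : ℕ) (H : Finset (Finset (Fin n))) : Finset (Finset (Fin n)) :=
  Finset.univ.filter (fun p => p.card = 2 ∧ ∃ e ∈ H, p ⊆ e)

lemma posPairs_card_le (n : ℕ) (H : Finset (Finset (Fin n))) :
    (posPairs n H).card ≤ n ^ 2 := by
  have h1 : posPairs n H ⊆ (Finset.univ : Finset (Fin n)).powersetCard 2 := by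
    intro p hp
    simp only [posPairs, mem_filter] at hp
    rw [Finset.mem_powersetCard]
    exact ⟨subset_univ p, hp.2.1⟩
  calc (posPairs n H).card ≤ ((Finset.univ : Finset (Fin n)).powersetCard 2).card :=
        card_le_card h1
    _ = n.choose 2 := by rw [card_powersetCard, card_univ, Fintype.card_fin]
    _ ≤ n ^ 2 := by
        rw [Nat.choose_two_right]
        calc n * (n - 1) / 2 ≤ n * (n - 1) := Nat.div_le_self _ _
          _ ≤ n * n := Nat.mul_le_mul_left _ (Nat.sub_le _ _)
          _ = n ^ 2 := (sq n).symm

lemma key (s : ℕ) (hs : 1 ≤ s) (n : ℕ) :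
    ∀ m (H : Finset (Finset (Fin n))), H.card ≤ m →
      (∀ e ∈ H, e.card = 3) →
      (¬ ∃ f : ℕ → Fin n, Set.InjOn f (Set.Iio (s + 2)) ∧
        ∀ i < s, ({f i, f (i + 1), f (i + 2)} : Finset (Fin n)) ∈ H) →
      H.card ≤ (s + 1) * (posPairs n H).card := by
  intro m
  induction m with
  | zero =>
    intro H hH _ _
    simp [Nat.le_zero.mp hH]
  | succ m ih =>
    intro H hHm h3 hfree
    by_cases hne : H = ∅
    · simp [hne]
    by_cases hlow : ∃ p : Finset (Fin n), p.card = 2 ∧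
        1 ≤ (H.filter (fun e => p ⊆ e)).card ∧ (H.filter (fun e => p ⊆ e)).card ≤ s + 1
    · -- delete all edges through a low-codegree pair
      obtain ⟨p, hp2, hp1, hps⟩ := hlow
      set H' := H.filter (fun e => ¬ p ⊆ e) with hH'
      have hsub : H' ⊆ H := filter_subset _ _
      have hcard : (H.filter (fun e => p ⊆ e)).card + H'.card = H.card :=
        Finset.card_filter_add_card_filter_not (p := fun e => p ⊆ e)
      have hlt : H'.card ≤ m := by omega
      have h3' : ∀ e ∈ H', e.card = 3 := fun e he => h3 e (hsub he)
      have hfree' : ¬ ∃ f : ℕ → Fin n, Set.InjOn f (Set.Iio (s + 2)) ∧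
          ∀ i < s, ({f i, f (i + 1), f (i + 2)} : Finset (Fin n)) ∈ H' := by
        rintro ⟨f, hf1, hf2⟩
        exact hfree ⟨f, hf1, fun i hi => hsub (hf2 i hi)⟩
      have hih := ih H' hlt h3' hfree'
      -- p is a positive pair of H but not of H'
      have hpH : p ∈ posPairs n H := by
        obtain ⟨e, he⟩ := Finset.card_pos.mp (by omega : 0 < (H.filter (fun e => p ⊆ e)).card)
        rw [mem_filter] at he
        simp only [posPairs, mem_filter, mem_univ, true_and]
        exact ⟨hp2, e, he.1, he.2⟩
      have hpH' : p ∉ posPairs n H' := by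
        simp only [posPairs, mem_filter, mem_univ, true_and, hH', not_and, not_exists]
        rintro - e he
        exact he.2
      have hmono : insert p (posPairs n H') ⊆ posPairs n H := by
        intro q hq
        rw [mem_insert] at hq
        rcases hq with rfl | hq
        · exact hpH
        · simp only [posPairs, mem_filter, mem_univ, true_and] at hq ⊢
          obtain ⟨hq2, e, he, hqe⟩ := hq
          exact ⟨hq2, e, hsub he, hqe⟩
      have hcards : (posPairs n H').card + 1 ≤ (posPairs n H).card := by
        have := card_le_card hmono
        rwa [card_insert_of_notMem hpH'] at this
      calc H.card = (H.filter (fun e => p ⊆ e)).card + H'.card := hcard.symm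
        _ ≤ (s + 1) + (s + 1) * (posPairs n H').card := by
            exact Nat.add_le_add hps hih
        _ = (s + 1) * ((posPairs n H').card + 1) := by ring
        _ ≤ (s + 1) * (posPairs n H).card := Nat.mul_le_mul_left _ hcards
    · -- every positive pair has codegree ≥ s + 2 : build a tight path
      exfalso
      push_neg at hlow
      have hbig : ∀ p : Finset (Fin n), p.card = 2 →
          1 ≤ (H.filter (fun e => p ⊆ e)).card →
          s + 2 ≤ (H.filter (fun e => p ⊆ e)).card := by
        intro p hp2 hp1
        have := hlow p hp2 hp1
        omega
      -- greedy path-building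
      have build : ∀ k, 1 ≤ k → k ≤ s → ∃ f : ℕ → Fin n,
          Set.InjOn f (Set.Iio (k + 2)) ∧
          ∀ i < k, ({f i, f (i + 1), f (i + 2)} : Finset (Fin n)) ∈ H := by
        intro k
        induction k with
        | zero => omega
        | succ k ihk =>
          intro _ hks
          by_cases hk0 : k = 0
          · -- base case: any edge
            subst hk0
            obtain ⟨e, he⟩ := Finset.nonempty_iff_ne_empty.mpr hne
            obtain ⟨a, b, c, hab, hac, hbc, hef⟩ := Finset.card_eq_three.mp (h3 e he)
            refine ⟨fun i => if i = 0 then a else if i = 1 then b else c, ?_, ?_⟩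
            · intro i hi j hj hij
              simp only [Set.mem_Iio] at hi hj
              interval_cases i <;> interval_cases j <;>
                simp only [reduceIte] at hij <;>
                first
                  | rfl
                  | exact absurd hij hab
                  | exact absurd hij hac
                  | exact absurd hij hbc
                  | exact absurd hij.symm hab
                  | exact absurd hij.symm hac
                  | exact absurd hij.symm hbc
            · intro i hi
              interval_cases i
              simpa using hef ▸ he
          · -- inductive step: extend the path
            have hk1 : 1 ≤ k := by omega
            obtain ⟨f, hinj, hedge⟩ := ihk hk1 (by omega)
            set p : Finset (Fin n) := {f k, f (k + 1)} with hp
            have hfk : f k ≠ f (k + 1) := by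
              intro h
              have := hinj (Set.mem_Iio.mpr (by omega)) (Set.mem_Iio.mpr (by omega)) h
              omega
            have hp2 : p.card = 2 := by
              rw [hp, card_insert_of_notMem (by simp [hfk]), card_singleton]
            set E := H.filter (fun e => p ⊆ e) with hE
            have hlast : ({f (k - 1), f k, f (k + 1)} : Finset (Fin n)) ∈ E := by
              rw [hE, mem_filter]
              constructor
              · have := hedge (k - 1) (by omega)
                have h1 : k - 1 + 1 = k := by omega
                have h2 : k - 1 + 2 = k + 1 := by omega
                rwa [h1, h2] at this
              · rw [hp]
                intro x hx
                simp only [mem_insert, mem_singleton] at hx ⊢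
                tauto
            have hE1 : 1 ≤ E.card := Finset.card_pos.mpr ⟨_, hlast⟩
            have hEbig : s + 2 ≤ E.card := hbig p hp2 hE1
            -- the forbidden vertex set
            set F : Finset (Fin n) := (Finset.range (k + 2)).image f with hF
            have hFcard : F.card ≤ k + 2 := le_trans card_image_le (by simp)
            -- vertices extending p
            have hsd1 : ∀ e ∈ E, (e \ p).card = 1 := by
              intro e he
              rw [hE, mem_filter] at he
              rw [card_sdiff_of_subset he.2, h3 e he.1, hp2]
            have hsd_inj : ∀ e₁ ∈ E, ∀ e₂ ∈ E, e₁ \ p = e₂ \ p → e₁ = e₂ := by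
              intro e₁ h₁ e₂ h₂ h
              rw [hE, mem_filter] at h₁ h₂
              rw [← Finset.sdiff_union_of_subset h₁.2, ← Finset.sdiff_union_of_subset h₂.2, h]
            set V : Finset (Fin n) := E.biUnion (fun e => e \ p) with hV
            have hVcard : V.card = E.card := by
              rw [hV, card_biUnion]
              · rw [Finset.sum_congr rfl hsd1, Finset.sum_const, smul_eq_mul, mul_one]
              · intro e₁ h₁ e₂ h₂ hne12
                rw [Function.onFun, Finset.disjoint_left]
                intro a ha1 ha2
                obtain ⟨x, hx⟩ := Finset.card_eq_one.mp (hsd1 e₁ h₁)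
                obtain ⟨y, hy⟩ := Finset.card_eq_one.mp (hsd1 e₂ h₂)
                rw [hx, mem_singleton] at ha1
                rw [hy, mem_singleton] at ha2
                exact hne12 (hsd_inj e₁ h₁ e₂ h₂ (by rw [hx, hy, ← ha1, ← ha2]))
            have hVF : ¬ V ⊆ F := by
              intro h
              have := card_le_card h
              omega
            rw [Finset.not_subset] at hVF
            obtain ⟨w, hwV, hwF⟩ := hVF
            rw [hV, Finset.mem_biUnion] at hwV
            obtain ⟨e, heE, hwe⟩ := hwV
            have hesing : e \ p = {w} := by
              obtain ⟨x, hx⟩ := Finset.card_eq_one.mp (hsd1 e heE)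
              rw [hx, mem_singleton] at hwe
              rw [hx, hwe]
            have heeq : e = insert w p := by
              have hp_sub : p ⊆ e := by
                rw [hE, mem_filter] at heE; exact heE.2
              rw [← Finset.sdiff_union_of_subset hp_sub, hesing]
              ext x; simp
            have heH : e ∈ H := by rw [hE, mem_filter] at heE; exact heE.1
            have hwnotf : ∀ j < k + 2, w ≠ f j := by
              intro j hj h
              exact hwF (by rw [hF]; exact Finset.mem_image.mpr ⟨j, Finset.mem_range.mpr hj, h.symm⟩)
            -- the extended function
            refine ⟨fun i => if i = k + 2 then w else f i, ?_, ?_⟩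
            · intro i hi j hj hij
              simp only [Set.mem_Iio] at hi hj
              by_cases hik : i = k + 2 <;> by_cases hjk : j = k + 2
              · omega
              · simp only [hik, if_pos rfl, if_neg hjk] at hij
                exact absurd hij (hwnotf j (by omega))
              · simp only [hjk, if_neg hik, if_pos rfl] at hij
                exact absurd hij.symm (hwnotf i (by omega))
              · simp only [if_neg hik, if_neg hjk] at hij
                exact hinj (Set.mem_Iio.mpr (by omega)) (Set.mem_Iio.mpr (by omega)) hij
            · intro i hi
              by_cases hik : i = k
              · have h1 : ¬ (i = k + 2) := by omega
                have h2 : ¬ (i + 1 = k + 2) := by omega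
                have h3' : i + 2 = k + 2 := by omega
                have e1 : (if i = k + 2 then w else f i) = f k := by rw [if_neg h1, hik]
                have e2 : (if i + 1 = k + 2 then w else f (i + 1)) = f (k + 1) := by
                  rw [if_neg h2, hik]
                have e3 : (if i + 2 = k + 2 then w else f (i + 2)) = w := if_pos h3'
                have hset : ({f k, f (k + 1), w} : Finset (Fin n)) = e := by
                  rw [heeq, hp]
                  ext x; simp; tauto
                show ({(if i = k + 2 then w else f i), (if i + 1 = k + 2 then w else f (i + 1)),
                  (if i + 2 = k + 2 then w else f (i + 2))} : Finset (Fin n)) ∈ H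
                rw [e1, e2, e3, hset]
                exact heH
              · have hik2 : i < k := by omega
                have h1 : ¬ (i = k + 2) := by omega
                have h2 : ¬ (i + 1 = k + 2) := by omega
                have h3' : ¬ (i + 2 = k + 2) := by omega
                simp only [if_neg h1, if_neg h2, if_neg h3']
                exact hedge i hik2
      obtain ⟨f, hinj, hedge⟩ := build s hs le_rfl
      exact hfree ⟨f, hinj, hedge⟩

theorem stmt6 (s : ℕ) (hs : 1 ≤ s) :
    ∃ c : ℕ, ∀ (n : ℕ) (H : Finset (Finset (Fin n))),
      (∀ e ∈ H, e.card = 3) →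
      (¬ ∃ f : ℕ → Fin n, Set.InjOn f (Set.Iio (s + 2)) ∧
        ∀ i < s, ({f i, f (i + 1), f (i + 2)} : Finset (Fin n)) ∈ H) →
      H.card ≤ c * n ^ 2 := by
  refine ⟨s + 1, fun n H h3 hfree => ?_⟩
  calc H.card ≤ (s + 1) * (posPairs n H).card := key s hs n H.card H le_rfl h3 hfree
    _ ≤ (s + 1) * n ^ 2 := Nat.mul_le_mul_left _ (posPairs_card_le n H)
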